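/- Let q be a prime power. Define N₀' = #{(β,γ) ∈ 𝔽_q² : γ^q − γ = 0 and β⁴ − β + γ(β² − β) = 0}. Then N₀' = 3q − 2; consequently q·(q − 1 + N₀') = 4q² − 3q, the q-th decagonal number. -/
import Mathlib


theorem decagonal_count (F : Type*) [Field F] [Fintype F]
    (N₀' : ℕ)
    (hN₀' : N₀' = Nat.card {t : F × F //
        t.2 ^ Fintype.card F - t.2 = 0 ∧
        t.1 ^ 4 - t.1 + t.2 * (t.1 ^ 2 - t.1) = 0}) :
    N₀' = 3 * Fintype.card F - 2 ∧
      Fintype.card F * (Fintype.card F - 1 + N₀') =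
        4 * Fintype.card F ^ 2 - 3 * Fintype.card F := by
  classical
  set q := Fintype.card F with hq
  have hq2 : 2 ≤ q := Fintype.one_lt_card
  have hmain : N₀' = 3 * q - 2 := by
    rw [hN₀']
    have hP : ∀ t : F × F, (t.2 ^ q - t.2 = 0 ∧
        t.1 ^ 4 - t.1 + t.2 * (t.1 ^ 2 - t.1) = 0) ↔
        (t.1 = 0 ∨ t.1 = 1 ∨ t.2 = -(t.1 ^ 2 + t.1 + 1)) := by
      rintro ⟨β, γ⟩
      simp only []
      constructor
      · rintro ⟨-, h⟩
        have hf : β * (β - 1) * (β ^ 2 + β + γ + 1) = 0 := by linear_combination h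
        rcases mul_eq_zero.1 hf with hf | hf
        · rcases mul_eq_zero.1 hf with hf | hf
          · exact Or.inl hf
          · exact Or.inr (Or.inl (by linear_combination hf))
        · exact Or.inr (Or.inr (by linear_combination hf))
      · intro h
        refine ⟨by rw [FiniteField.pow_card, sub_self], ?_⟩
        rcases h with h | h | h
        · subst h; ring
        · subst h; ring
        · subst h; ring
    rw [Nat.card_congr (Equiv.subtypeEquivRight hP)]
    rw [Nat.card_congr (Equiv.subtypeProdEquivSigmaSubtype
        (fun β γ : F => β = 0 ∨ β = 1 ∨ γ = -(β ^ 2 + β + 1)))]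
    rw [Nat.card_eq_fintype_card, Fintype.card_sigma]
    have hterm : ∀ β : F, Nat.card {γ : F // β = 0 ∨ β = 1 ∨ γ = -(β ^ 2 + β + 1)} =
        if β = 0 ∨ β = 1 then q else 1 := by
      intro β
      by_cases hβ : β = 0 ∨ β = 1
      · rw [if_pos hβ]
        rw [Nat.card_congr (Equiv.subtypeUnivEquiv (fun γ => by tauto))]
        simp [q, Nat.card_eq_fintype_card]
      · rw [if_neg hβ]
        push_neg at hβ
        have : ∀ γ : F, (β = 0 ∨ β = 1 ∨ γ = -(β ^ 2 + β + 1)) ↔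
            γ = -(β ^ 2 + β + 1) := by tauto
        rw [Nat.card_congr (Equiv.subtypeEquivRight this)]
        simp [Nat.card_eq_fintype_card, Fintype.card_subtype_eq]
    rw [Finset.sum_congr rfl (fun β _ => (Nat.card_eq_fintype_card (α := _)).symm.trans (hterm β))]
    rw [Finset.sum_ite]
    simp only [Finset.sum_const, smul_eq_mul, Finset.filter_not]
    have hset : Finset.univ.filter (fun β : F => β = 0 ∨ β = 1) = {0, 1} := by
      ext β; simp
    have hcard2 : (Finset.univ.filter (fun β : F => β = 0 ∨ β = 1)).card = 2 := by
      rw [hset]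
      rw [Finset.card_insert_of_notMem (by simp), Finset.card_singleton]
    rw [hcard2]
    rw [Finset.card_sdiff_of_subset (Finset.filter_subset _ _), hcard2, Finset.card_univ]
    have : q - 2 + 2 = q := by omega
    omega
  refine ⟨hmain, ?_⟩
  obtain ⟨k, hk⟩ : ∃ k, q = k + 2 := ⟨q - 2, by omega⟩
  rw [hmain, hk]
  have h1 : k + 2 - 1 + (3 * (k + 2) - 2) = 4 * k + 5 := by omega
  rw [h1]
  have h2 : (k + 2) * (4 * k + 5) = 4 * k ^ 2 + 13 * k + 10 := by ring
  have h3 : 4 * (k + 2) ^ 2 = 4 * k ^ 2 + 16 * k + 16 := by ring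
  omega
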